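/- Let (S,L) be a Lie-Rinehart algebra over R, M a right U-module and N a compatible left S⋊L-module. The canonical map θ : M ⊗_S N → Hom_S(N^∨, M), sending m ⊗ n to the map φ ↦ m·φ(n), is a morphism of left U-modules: θ(α·(m ⊗ n)) = α·θ(m ⊗ n) for all α ∈ L, where L acts on Hom_S(N^∨,M) by (α·f)(φ) = −f(φ)·α + f(φ·α). -/
import Mathlib

/-- For a Lie-Rinehart algebra `(S,L)` over `R`, a right `U`-module `M`
(action `σ`) and a compatible left `S⋊L`-module `N` (action `ρ`), the canonical map
`θ : M ⊗_S N → Hom_S(N^∨,M)`, `m ⊗ n ↦ (φ ↦ m·φ(n))` is a morphism of left `U`-modules: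
`θ(α·(m⊗n)) = α·θ(m⊗n)`, stated pointwise at each `φ ∈ N^∨ = Hom_S(N,S)`, where the left
`U`-action on `Hom_S(N^∨,M)` is `(α·f)(φ) = −f(φ)·α + f(φ·α)` with
`(φ·α)(n) = −∂_α(φ(n)) + φ(α·n)`. -/
theorem stmt2 {R S L M N : Type*} [CommRing R] [CommRing S] [Algebra R S]
    [LieRing L] [LieAlgebra R L] [Module S L]
    [AddCommGroup M] [Module S M] [AddCommGroup N] [Module S N]
    (D : L → Derivation R S S)
    (hDsmul : ∀ (s : S) (α : L), D (s • α) = s • D α)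
    (σ : L → M → M)
    (hM1 : ∀ (α : L) (s : S) (m : M), s • σ α m = (D α s) • m + σ α (s • m))
    (hM2 : ∀ (s : S) (α : L) (m : M), σ (s • α) m = σ α (s • m))
    (ρ : L → N → N)
    (hN1 : ∀ (α : L) (s : S) (n : N), ρ α (s • n) = (D α s) • n + s • ρ α n)
    (hN2 : ∀ (s : S) (α : L) (n : N), ρ (s • α) n = s • ρ α n - (D α s) • n) :
    ∀ (α : L) (m : M) (n : N) (φ : N →ₗ[S] S),
      (φ n) • (-(σ α m)) + (φ (ρ α n)) • m
        = -(σ α ((φ n) • m)) + (-(D α (φ n)) + φ (ρ α n)) • m := by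
  intro α m n φ
  have h := hM1 α (φ n) m
  have : σ α ((φ n) • m) = (φ n) • σ α m - (D α (φ n)) • m := by
    rw [h]; abel
  rw [this, smul_neg, add_smul, neg_smul]
  abel
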